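/- Fix M ∈ {2,3,4,6}, h = h_M, a real number φ, and let G = U(1)⋉_φ(ℤ²⋊ℤ_M) be the magnetic space group. Represent each U(1)-component by its representative z ∈ [0,1), and define f_v(g₁,g₂) = z₁ + z₂ + (φ/2)(r₁ × h^{j₁} r₂) − z₁₂, where z₁₂ ∈ [0,1) is the representative of the U(1)-component of g₁g₂. Then (i) f_v takes values in ℤ and is a 2-cocycle on G with coefficients in ℤ (trivial action), and (ii) for every nonzero integer n there is no function χ : G → ℤ whose coboundary equals n·f_v; that is, no nonzero integer multiple of f_v is a 2-coboundary. -/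
import Mathlib

open Matrix

noncomputable section

/-- The standard order-`M` rotation matrix on `ℤ²`, for `M ∈ {2,3,4,6}`. -/
def hRot (M : ℕ) : Matrix (Fin 2) (Fin 2) ℤ :=
  if M = 2 then !![-1, 0; 0, -1]
  else if M = 3 then !![0, 1; -1, -1]
  else if M = 4 then !![0, 1; -1, 0]
  else if M = 6 then !![0, 1; -1, 1]
  else 1

/-- The cross product `(x,y) × (x',y') = x y' − y x'` of integer vectors. -/
def crossZ (r r' : Fin 2 → ℤ) : ℤ := r 0 * r' 1 - r 1 * r' 0

/-- The underlying set `(ℝ/ℤ) × ℤ² × ℤ/M` of the magnetic space group. -/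
abbrev MagSp (M : ℕ) : Type := AddCircle (1 : ℝ) × (Fin 2 → ℤ) × ZMod M

/-- The magnetic space group operation. -/
def magSpMul (M : ℕ) (φ : ℝ) (g₁ g₂ : MagSp M) : MagSp M :=
  (g₁.1 + g₂.1 +
      (↑(φ / 2 * ((crossZ g₁.2.1 ((hRot M ^ (g₁.2.2).val).mulVec g₂.2.1) : ℤ) : ℝ)) :
        AddCircle (1 : ℝ)),
    g₁.2.1 + (hRot M ^ (g₁.2.2).val).mulVec g₂.2.1,
    g₁.2.2 + g₂.2.2)

/-- The representative in `[0,1)` of an element of `ℝ/ℤ`. -/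
def rep1 (z : AddCircle (1 : ℝ)) : ℝ :=
  haveI : Fact ((0 : ℝ) < 1) := ⟨one_pos⟩
  (AddCircle.equivIco 1 0 z : ℝ)

/-- The vison cocycle `f_v(g₁,g₂) = z₁ + z₂ + (φ/2)(r₁ × h^{j₁} r₂) − z₁₂`, in terms of the
representatives `z ∈ [0,1)` of the `U(1)`-components. -/
def fV (M : ℕ) (φ : ℝ) (g₁ g₂ : MagSp M) : ℝ :=
  rep1 g₁.1 + rep1 g₂.1 +
      φ / 2 * ((crossZ g₁.2.1 ((hRot M ^ (g₁.2.2).val).mulVec g₂.2.1) : ℤ) : ℝ) -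
    rep1 (magSpMul M φ g₁ g₂).1

/- ### Auxiliary lemmas -/

lemma rep1_fract (x : ℝ) : rep1 (↑x) = Int.fract x := by
  haveI : Fact ((0 : ℝ) < 1) := ⟨one_pos⟩
  unfold rep1
  rw [AddCircle.coe_equivIco_mk_apply]
  simp

lemma rep1_coe (z : AddCircle (1 : ℝ)) : ((rep1 z : ℝ) : AddCircle (1 : ℝ)) = z := by
  haveI : Fact ((0 : ℝ) < 1) := ⟨one_pos⟩
  exact (AddCircle.equivIco 1 0).symm_apply_apply z

lemma sub_rep1_int (x : ℝ) : ∃ k : ℤ, x - rep1 (↑x) = k :=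
  ⟨⌊x⌋, by rw [rep1_fract]; exact (Int.self_sub_fract x).symm ▸ rfl⟩

lemma crossZ_mulVec (A : Matrix (Fin 2) (Fin 2) ℤ) (r s : Fin 2 → ℤ) :
    crossZ (A.mulVec r) (A.mulVec s) = A.det * crossZ r s := by
  simp only [crossZ, Matrix.mulVec, dotProduct, Fin.sum_univ_two, Matrix.det_fin_two]
  ring

lemma crossZ_add_left (a u w : Fin 2 → ℤ) : crossZ (a + u) w = crossZ a w + crossZ u w := by
  simp only [crossZ, Pi.add_apply]; ring

lemma crossZ_add_right (a u w : Fin 2 → ℤ) : crossZ a (u + w) = crossZ a u + crossZ a w := by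
  simp only [crossZ, Pi.add_apply]; ring

lemma det_hRot {M : ℕ} (hM : M ∈ ({2, 3, 4, 6} : Set ℕ)) : (hRot M).det = 1 := by
  simp only [Set.mem_insert_iff, Set.mem_singleton_iff] at hM
  rcases hM with h | h | h | h <;> subst h <;>
    norm_num [hRot, Matrix.det_fin_two_of]

lemma hRot_pow_card {M : ℕ} (hM : M ∈ ({2, 3, 4, 6} : Set ℕ)) : hRot M ^ M = 1 := by
  simp only [Set.mem_insert_iff, Set.mem_singleton_iff] at hM
  rcases hM with h | h | h | h <;> subst h <;>
    · rw [Matrix.one_fin_two]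
      norm_num [hRot, pow_succ, Matrix.mul_fin_two]

lemma hRot_pow_mod {M : ℕ} (hM : M ∈ ({2, 3, 4, 6} : Set ℕ)) (x : ℕ) :
    hRot M ^ (x % M) = hRot M ^ x := by
  conv_rhs => rw [← Nat.div_add_mod x M]
  rw [pow_add, pow_mul, hRot_pow_card hM, one_pow, one_mul]

lemma M_ne_zero {M : ℕ} (hM : M ∈ ({2, 3, 4, 6} : Set ℕ)) : M ≠ 0 := by
  simp only [Set.mem_insert_iff, Set.mem_singleton_iff] at hM
  rcases hM with h | h | h | h <;> omega

lemma hRot_pow_val_add {M : ℕ} (hM : M ∈ ({2, 3, 4, 6} : Set ℕ)) (j₁ j₂ : ZMod M) :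
    hRot M ^ ((j₁ + j₂).val) = hRot M ^ j₁.val * hRot M ^ j₂.val := by
  haveI : NeZero M := ⟨M_ne_zero hM⟩
  rw [ZMod.val_add, hRot_pow_mod hM, pow_add]

/-- `f_v` is an integer-valued 2-cocycle on the magnetic space group, and no nonzero
integer multiple of it is the coboundary of a `ℤ`-valued function. -/
theorem vison_cocycle_is_integrally_nontrivial
    (M : ℕ) (hM : M ∈ ({2, 3, 4, 6} : Set ℕ)) (φ : ℝ) :
    (∀ g₁ g₂ : MagSp M, ∃ k : ℤ, fV M φ g₁ g₂ = k) ∧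
    (∀ g₁ g₂ g₃ : MagSp M,
      fV M φ g₂ g₃ - fV M φ (magSpMul M φ g₁ g₂) g₃ + fV M φ g₁ (magSpMul M φ g₂ g₃) -
        fV M φ g₁ g₂ = 0) ∧
    (∀ n : ℤ, n ≠ 0 →
      ¬ ∃ χ : MagSp M → ℤ, ∀ g₁ g₂ : MagSp M,
        (n : ℝ) * fV M φ g₁ g₂ =
          (χ g₂ : ℝ) - (χ (magSpMul M φ g₁ g₂) : ℝ) + (χ g₁ : ℝ)) := by
  refine ⟨?_, ?_, ?_⟩
  · -- integer valued
    intro g₁ g₂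
    set c : ℝ := φ / 2 * ((crossZ g₁.2.1 ((hRot M ^ (g₁.2.2).val).mulVec g₂.2.1) : ℤ) : ℝ)
      with hc
    have h1 : (magSpMul M φ g₁ g₂).1 = ((rep1 g₁.1 + rep1 g₂.1 + c : ℝ) : AddCircle (1 : ℝ)) := by
      show g₁.1 + g₂.1 + (↑c : AddCircle (1:ℝ)) = _
      rw [AddCircle.coe_add, AddCircle.coe_add, rep1_coe, rep1_coe]
    have h2 : fV M φ g₁ g₂ =
        (rep1 g₁.1 + rep1 g₂.1 + c) - rep1 (↑(rep1 g₁.1 + rep1 g₂.1 + c)) := by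
      rw [fV, h1]
    rw [h2]
    exact sub_rep1_int _
  · -- cocycle
    rintro ⟨z₁, r₁, j₁⟩ ⟨z₂, r₂, j₂⟩ ⟨z₃, r₃, j₃⟩
    have hdetA : (hRot M ^ j₁.val).det = 1 := by
      rw [Matrix.det_pow, det_hRot hM, one_pow]
    have hAB : hRot M ^ ((j₁ + j₂).val) = hRot M ^ j₁.val * hRot M ^ j₂.val :=
      hRot_pow_val_add hM j₁ j₂
    simp only [fV, magSpMul]
    rw [hAB]
    set A := hRot M ^ j₁.val with hA
    set B := hRot M ^ j₂.val with hB
    set c12 : ℝ := φ / 2 * ((crossZ r₁ (A.mulVec r₂) : ℤ) : ℝ) with hc12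
    set c23 : ℝ := φ / 2 * ((crossZ r₂ (B.mulVec r₃) : ℤ) : ℝ) with hc23
    set c123 : ℝ := φ / 2 * ((crossZ (r₁ + A.mulVec r₂) ((A * B).mulVec r₃) : ℤ) : ℝ) with hc123
    set c1_23 : ℝ := φ / 2 * ((crossZ r₁ (A.mulVec (r₂ + B.mulVec r₃)) : ℤ) : ℝ) with hc1_23
    have hZcross : crossZ r₂ (B.mulVec r₃) - crossZ (r₁ + A.mulVec r₂) ((A * B).mulVec r₃)
        + crossZ r₁ (A.mulVec (r₂ + B.mulVec r₃)) - crossZ r₁ (A.mulVec r₂) = 0 := by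
      rw [← Matrix.mulVec_mulVec, Matrix.mulVec_add, crossZ_add_left, crossZ_add_right,
        crossZ_mulVec, hdetA, one_mul]
      ring
    have hcast : ((crossZ r₂ (B.mulVec r₃) : ℤ) : ℝ)
        - ((crossZ (r₁ + A.mulVec r₂) ((A * B).mulVec r₃) : ℤ) : ℝ)
        + ((crossZ r₁ (A.mulVec (r₂ + B.mulVec r₃)) : ℤ) : ℝ)
        - ((crossZ r₁ (A.mulVec r₂) : ℤ) : ℝ) = 0 := by
      exact_mod_cast congrArg (fun k : ℤ => (k : ℝ)) hZcross
    have hsum : c23 - c123 + c1_23 - c12 = 0 := by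
      rw [hc12, hc23, hc123, hc1_23]; linear_combination φ / 2 * hcast
    have hreal : c12 + c123 = c23 + c1_23 := by linarith
    have hPr : z₁ + z₂ + (↑c12 : AddCircle (1 : ℝ)) + z₃ + ↑c123
        = z₁ + (z₂ + z₃ + ↑c23) + ↑c1_23 := by
      calc z₁ + z₂ + (↑c12 : AddCircle (1 : ℝ)) + z₃ + ↑c123
          = z₁ + z₂ + z₃ + ↑(c12 + c123) := by rw [AddCircle.coe_add]; abel
        _ = z₁ + z₂ + z₃ + ↑(c23 + c1_23) := by rw [hreal]
        _ = z₁ + (z₂ + z₃ + ↑c23) + ↑c1_23 := by rw [AddCircle.coe_add]; abel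
    rw [hPr]
    linarith
  · -- nontriviality
    rintro n hn ⟨χ, hχ⟩
    have hmul0 : ∀ z₁ z₂ : AddCircle (1 : ℝ),
        magSpMul M φ (z₁, 0, 0) (z₂, 0, 0) = (z₁ + z₂, (0 : Fin 2 → ℤ), (0 : ZMod M)) := by
      intro z₁ z₂
      simp [magSpMul, crossZ, Matrix.mulVec_zero]
    have hfV0 : ∀ z₁ z₂ : AddCircle (1 : ℝ),
        fV M φ (z₁, 0, 0) (z₂, 0, 0) = rep1 z₁ + rep1 z₂ - rep1 (z₁ + z₂) := by
      intro z₁ z₂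
      rw [fV, hmul0]
      simp [crossZ, Matrix.mulVec_zero, magSpMul]
    set F : AddCircle (1 : ℝ) → ℝ :=
      fun z => (χ (z, 0, 0) : ℝ) - (n : ℝ) * rep1 z with hF
    have hadd : ∀ z₁ z₂ : AddCircle (1 : ℝ), F (z₁ + z₂) = F z₁ + F z₂ := by
      intro z₁ z₂
      have h := hχ (z₁, 0, 0) (z₂, 0, 0)
      rw [hmul0, hfV0] at h
      simp only [hF]
      ring_nf
      ring_nf at h
      linarith
    have hF0 : F 0 = 0 := by
      have h := hadd 0 0
      rw [add_zero] at h
      linarith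
    have hsmul : ∀ (k : ℕ) (z : AddCircle (1 : ℝ)), F (k • z) = k * F z := by
      intro k
      induction k with
      | zero => intro z; simpa [zero_nsmul] using hF0
      | succ k ih =>
        intro z
        rw [succ_nsmul, hadd, ih]
        push_cast
        ring
    -- now specialize to z₀ = 1/m with m = 2 |n|
    set m : ℕ := 2 * n.natAbs with hm
    have hmpos : 0 < m := by
      have : n.natAbs ≠ 0 := Int.natAbs_ne_zero.mpr hn
      omega
    set z₀ : AddCircle (1 : ℝ) := ((1 / (m : ℝ) : ℝ) : AddCircle (1 : ℝ)) with hz₀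
    have hmne : (m : ℝ) ≠ 0 := Nat.cast_ne_zero.mpr hmpos.ne'
    have hmz : (m : ℕ) • z₀ = 0 := by
      rw [hz₀, ← AddCircle.coe_nsmul]
      have : (m : ℕ) • (1 / (m : ℝ)) = 1 := by
        rw [nsmul_eq_mul]
        field_simp
      rw [this]
      exact AddCircle.coe_period (p := (1 : ℝ)) ▸ rfl
    have hrep : rep1 z₀ = 1 / (m : ℝ) := by
      rw [hz₀, rep1_fract, Int.fract_eq_self]
      constructor
      · positivity
      · rw [div_lt_one (by positivity)]
        have : (2 : ℝ) ≤ (m : ℝ) := by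
          have : 2 ≤ m := by
            have : n.natAbs ≠ 0 := Int.natAbs_ne_zero.mpr hn
            omega
          exact_mod_cast this
        linarith
    have hkey : (0 : ℝ) = (m : ℝ) * F z₀ := by
      rw [← hsmul m z₀, hmz, hF0]
    have hFz₀ : F z₀ = (χ (z₀, 0, 0) : ℝ) - (n : ℝ) * (1 / (m : ℝ)) := by
      rw [hF]
      dsimp only
      rw [hrep]
    set Ψ : ℤ := χ (z₀, 0, 0) with hΨ
    have heq : (m : ℝ) * (Ψ : ℝ) - (n : ℝ) = 0 := by
      have h1 : (m : ℝ) * ((n : ℝ) * (1 / (m : ℝ))) = (n : ℝ) := by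
        field_simp
      rw [hFz₀] at hkey
      rw [mul_sub, h1] at hkey
      linarith
    have heqZ : (m : ℤ) * Ψ - n = 0 := by exact_mod_cast heq
    have hdvd : ((m : ℤ)) ∣ n := ⟨Ψ, by linarith⟩
    have hdvdabs : ((m : ℤ)) ∣ |n| := (dvd_abs _ _).mpr hdvd
    have hle : (m : ℤ) ≤ |n| := Int.le_of_dvd (abs_pos.mpr hn) hdvdabs
    have : (m : ℤ) = 2 * |n| := by
      rw [hm]
      push_cast
      rw [Int.abs_eq_natAbs]
    have habs : 0 < |n| := abs_pos.mpr hn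
    omega
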